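/- Let (u_p)_{p ∈ [0,1]} be any family of utility functions where each u_p : [0,1] → ℝ is single-peaked with peak p. A mechanism f : [0,1] → [0,1] for a single agent is continuous and strategyproof on this domain if and only if there exist constants α_0 ≤ α_1 in [0,1] such that f(p) = med(p, α_0, α_1) for all p ∈ [0,1]. -/

import Mathlib

def SinglePeaked (p : ℝ) (u : ℝ → ℝ) : Prop :=
  ∀ q ∈ Set.Icc (0:ℝ) 1, q ≠ p → ∀ l ∈ Set.Ioo (0:ℝ) 1,
    u q < u (l * p + (1 - l) * q) ∧ u (l * p + (1 - l) * q) < u p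

noncomputable def med (l : List ℝ) : ℝ :=
  (l.insertionSort (· ≤ ·)).getD (l.length / 2) 0

lemma med3 {p a0 a1 : ℝ} (h : a0 ≤ a1) : med [p, a0, a1] = max a0 (min p a1) := by
  simp only [med, List.insertionSort, List.foldr, List.orderedInsert]
  rw [if_pos h]
  simp only [List.orderedInsert, List.length]
  split_ifs with h1 h2
  · have e : a0 ⊔ p ⊓ a1 = a0 := max_eq_left (le_trans (min_le_left _ _) h1)
    simp [e]
  · have e : a0 ⊔ p ⊓ a1 = p := by rw [min_eq_left h2, max_eq_right (le_of_not_ge h1)]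
    simp [e]
  · have e : a0 ⊔ p ⊓ a1 = a1 := by rw [min_eq_right (le_of_not_ge h2), max_eq_right h]
    simp [e]

lemma sp_chain {p : ℝ} {u : ℝ → ℝ} (h : SinglePeaked p u) {q : ℝ}
    (hq : q ∈ Set.Icc (0:ℝ) 1) (hne : q ≠ p) : u q < u p := by
  obtain ⟨h1, h2⟩ := h q hq hne (1/2) (by norm_num)
  linarith

lemma sp_right {p : ℝ} {u : ℝ → ℝ} (h : SinglePeaked p u) {x y : ℝ}
    (hx : x ∈ Set.Icc (0:ℝ) 1) (hy : y ∈ Set.Icc (0:ℝ) 1)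
    (hpx : p ≤ x) (hxy : x < y) : u y < u x := by
  rcases eq_or_lt_of_le hpx with rfl | hpx
  · exact sp_chain h hy hxy.ne'
  · have hyp : p < y := hpx.trans hxy
    have hl : (y - x)/(y - p) ∈ Set.Ioo (0:ℝ) 1 := by
      constructor
      · apply div_pos <;> linarith
      · rw [div_lt_one (by linarith)]; linarith
    have h2 := (h y hy (by intro hh; linarith [hh ▸ hyp]) ((y - x)/(y - p)) hl).1
    have hne0 : y - p ≠ 0 := by linarith
    have heq : (y - x)/(y - p) * p + (1 - (y - x)/(y - p)) * y = x := by
      field_simp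
      ring
    rwa [heq] at h2

lemma sp_left {p : ℝ} {u : ℝ → ℝ} (h : SinglePeaked p u) {x y : ℝ}
    (hx : x ∈ Set.Icc (0:ℝ) 1) (hy : y ∈ Set.Icc (0:ℝ) 1)
    (hyp : y ≤ p) (hxy : x < y) : u x < u y := by
  rcases eq_or_lt_of_le hyp with rfl | hyp
  · exact sp_chain h hx hxy.ne
  · have hxp : x < p := hxy.trans hyp
    have hl : (y - x)/(p - x) ∈ Set.Ioo (0:ℝ) 1 := by
      constructor
      · apply div_pos <;> linarith
      · rw [div_lt_one (by linarith)]; linarith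
    have h2 := (h x hx (by intro hh; linarith [hh ▸ hxp]) ((y - x)/(p - x)) hl).1
    have hne0 : p - x ≠ 0 := by linarith
    have heq : (y - x)/(p - x) * p + (1 - (y - x)/(p - x)) * x = y := by
      field_simp
      ring
    rwa [heq] at h2

theorem single_agent_characterization
    (u : ℝ → ℝ → ℝ) (hu : ∀ p ∈ Set.Icc (0:ℝ) 1, SinglePeaked p (u p))
    (f : ℝ → ℝ) (hf : ∀ p ∈ Set.Icc (0:ℝ) 1, f p ∈ Set.Icc (0:ℝ) 1) :
    (ContinuousOn f (Set.Icc 0 1) ∧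
        ∀ p ∈ Set.Icc (0:ℝ) 1, ∀ p' ∈ Set.Icc (0:ℝ) 1, u p (f p') ≤ u p (f p)) ↔
      ∃ a0 a1 : ℝ, a0 ∈ Set.Icc (0:ℝ) 1 ∧ a1 ∈ Set.Icc (0:ℝ) 1 ∧ a0 ≤ a1 ∧
        ∀ p ∈ Set.Icc (0:ℝ) 1, f p = med [p, a0, a1] := by
  constructor
  · rintro ⟨hc, hsp⟩
    obtain ⟨p0, hp0, hmin⟩ := isCompact_Icc.exists_isMinOn
      (Set.nonempty_Icc.2 zero_le_one) hc
    obtain ⟨p1, hp1, hmax⟩ := isCompact_Icc.exists_isMaxOn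
      (Set.nonempty_Icc.2 zero_le_one) hc
    set a0 := f p0 with ha0
    set a1 := f p1 with ha1
    have ha01 : a0 ≤ a1 := hmin hp1
    have hIcc : Set.Icc a0 a1 ⊆ f '' Set.Icc 0 1 :=
      (isPreconnected_Icc.image f hc).Icc_subset ⟨p0, hp0, rfl⟩ ⟨p1, hp1, rfl⟩
    refine ⟨a0, a1, hf p0 hp0, hf p1 hp1, ha01, fun p hp => ?_⟩
    rw [med3 ha01]
    rcases lt_or_ge p a0 with hpa0 | hpa0
    · have h1 : u p a0 ≤ u p (f p) := hsp p hp p0 hp0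
      have h2 : a0 ≤ f p := hmin hp
      rcases eq_or_lt_of_le h2 with heq | hlt
      · rw [← heq, max_eq_left (le_trans (min_le_left _ _) hpa0.le)]
      · exfalso
        have := sp_right (hu p hp) (hf p0 hp0) (hf p hp) hpa0.le hlt
        linarith
    · rcases le_or_gt p a1 with hpa1 | hpa1
      · -- p ∈ [a0, a1] : f p = p
        obtain ⟨q, hq, hfq⟩ := hIcc ⟨hpa0, hpa1⟩
        have h1 : u p p ≤ u p (f p) := by
          have := hsp p hp q hq; rwa [hfq] at this
        have hfp : f p = p := by
          by_contra hne
          have := sp_chain (hu p hp) (hf p hp) hne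
          linarith
        rw [hfp, min_eq_left hpa1, max_eq_right hpa0]
      · have h1 : u p a1 ≤ u p (f p) := hsp p hp p1 hp1
        have h2 : f p ≤ a1 := hmax hp
        rcases eq_or_lt_of_le h2 with heq | hlt
        · rw [heq, min_eq_right hpa1.le, max_eq_right ha01]
        · exfalso
          have := sp_left (hu p hp) (hf p hp) (hf p1 hp1) hpa1.le hlt
          linarith
  · rintro ⟨a0, a1, h0, h1, h01, hmed⟩
    have hclamp : ∀ p ∈ Set.Icc (0:ℝ) 1, f p = max a0 (min p a1) := by
      intro p hp; rw [hmed p hp, med3 h01]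
    constructor
    · exact (continuous_const.max (continuous_id.min continuous_const)).continuousOn.congr
        (fun p hp => (hclamp p hp))
    · intro p hp p' hp'
      rw [hclamp p hp, hclamp p' hp']
      have hmem : max a0 (min p' a1) ∈ Set.Icc (0:ℝ) 1 :=
        ⟨le_trans h0.1 (le_max_left _ _),
         max_le h0.2 (le_trans (min_le_right _ _) h1.2)⟩
      have hge : a0 ≤ max a0 (min p' a1) := le_max_left _ _
      have hle : max a0 (min p' a1) ≤ a1 := max_le h01 (min_le_right _ _)
      rcases lt_or_ge p a0 with hpa0 | hpa0
      · rw [max_eq_left (le_trans (min_le_left _ _) hpa0.le)]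
        rcases eq_or_lt_of_le hge with heq | hlt
        · rw [← heq]
        · exact (sp_right (hu p hp) h0 hmem hpa0.le hlt).le
      · rcases le_or_gt p a1 with hpa1 | hpa1
        · rw [min_eq_left hpa1, max_eq_right hpa0]
          rcases eq_or_ne (max a0 (min p' a1)) p with heq | hne
          · rw [heq]
          · exact (sp_chain (hu p hp) hmem hne).le
        · rw [min_eq_right hpa1.le, max_eq_right h01]
          rcases eq_or_lt_of_le hle with heq | hlt
          · rw [heq]
          · exact (sp_left (hu p hp) hmem h1 hpa1.le hlt).le
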